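/- Let C* ∈ Cor(n,m), let Ĉ* ∈ E_{n+m} be a PSD completion of C*, and let Z be a real symmetric positive semidefinite (n+m)×(n+m) matrix such that Z_{ij} = 0 whenever i ≠ j and either both i,j ≤ n or both i,j > n, and such that Tr(Ĉ* Z) = 0. Then for every C ∈ Cor(n,m) one has −2 Σ_{x∈[n]} Σ_{y∈[m]} Z_{x, n+y} C_{xy} ≤ Σ_{i=1}^{n+m} Z_{ii}, and equality holds for C = C*; i.e., the corresponding hyperplane supports Cor(n,m) at C*. -/

import Mathlib

open Matrix Real
open scoped RealInnerProductSpace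

/-- The set of quantum correlation matrices (Tsirelson): `n × m` real matrices whose entries
are inner products of unit vectors in `ℝ^{n+m}`. -/
def Cor (n m : ℕ) : Set (Matrix (Fin n) (Fin m) ℝ) :=
  {C | ∃ u : Fin n → EuclideanSpace ℝ (Fin (n + m)),
       ∃ v : Fin m → EuclideanSpace ℝ (Fin (n + m)),
       (∀ x, ‖u x‖ = 1) ∧ (∀ y, ‖v y‖ = 1) ∧
       ∀ x y, C x y = ⟪u x, v y⟫}

/-- The elliptope: PSD matrices with unit diagonal. -/
def Elliptope (k : ℕ) : Set (Matrix (Fin k) (Fin k) ℝ) :=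
  {X | X.PosSemidef ∧ ∀ i, X i i = 1}

/-- `X` is a PSD completion of `C`. -/
def IsPSDCompletion (n m : ℕ) (X : Matrix (Fin (n + m)) (Fin (n + m)) ℝ)
    (C : Matrix (Fin n) (Fin m) ℝ) : Prop :=
  X ∈ Elliptope (n + m) ∧ ∀ x y, X (Fin.castAdd m x) (Fin.natAdd n y) = C x y

/-- `C` is an extreme point of the convex set `S`. -/
def IsExtremePt {E : Type*} [AddCommMonoid E] [Module ℝ E] (S : Set E) (C : E) : Prop :=
  C ∈ S ∧ ∀ C₁ ∈ S, ∀ C₂ ∈ S, ∀ l : ℝ, 0 < l → l < 1 →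
    C = l • C₁ + (1 - l) • C₂ → C₁ = C ∧ C₂ = C

lemma psd_trace_nonneg {k : ℕ} {M : Matrix (Fin k) (Fin k) ℝ} (hM : M.PosSemidef) :
    0 ≤ M.trace := by
  rw [Matrix.trace]
  apply Finset.sum_nonneg
  intro i _
  have := hM.diag_nonneg (i := i)
  simpa [dotProduct, Matrix.mulVec, Pi.single_apply, Finset.sum_ite_eq,
    Matrix.diag] using this

lemma trace_mul_psd_nonneg {k : ℕ} {X Z : Matrix (Fin k) (Fin k) ℝ}
    (hX : X.PosSemidef) (hZ : Z.PosSemidef) : 0 ≤ (X * Z).trace := by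
  obtain ⟨B, rfl⟩ : ∃ B : Matrix (Fin k) (Fin k) ℝ, Z = Bᴴ * B := by
    open scoped MatrixOrder Matrix.Norms.L2Operator in
    exact CStarAlgebra.nonneg_iff_eq_star_mul_self.mp hZ.nonneg
  rw [← Matrix.mul_assoc, Matrix.trace_mul_cycle]
  exact psd_trace_nonneg (hX.mul_mul_conjTranspose_same B)

lemma trace_expand (n m : ℕ) (Z : Matrix (Fin (n + m)) (Fin (n + m)) ℝ)
    (hZs : ∀ i j, Z i j = Z j i)
    (hblock : ∀ i j : Fin (n + m), i ≠ j →
      ((i.val < n ∧ j.val < n) ∨ (n ≤ i.val ∧ n ≤ j.val)) → Z i j = 0)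
    (X : Matrix (Fin (n + m)) (Fin (n + m)) ℝ)
    (hXs : ∀ i j, X i j = X j i) (hXd : ∀ i, X i i = 1) :
    (X * Z).trace = (∑ i, Z i i) +
      2 * ∑ x : Fin n, ∑ y : Fin m,
        Z (Fin.castAdd m x) (Fin.natAdd n y) * X (Fin.castAdd m x) (Fin.natAdd n y) := by
  have htr : (X * Z).trace = ∑ i, ∑ j, X i j * Z j i := by
    simp [Matrix.trace, Matrix.mul_apply, Matrix.diag]
  rw [htr, Fin.sum_univ_add]
  have h1 : ∀ x : Fin n, (∑ j, X (Fin.castAdd m x) j * Z j (Fin.castAdd m x)) =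
      Z (Fin.castAdd m x) (Fin.castAdd m x) +
      ∑ y : Fin m, Z (Fin.castAdd m x) (Fin.natAdd n y) * X (Fin.castAdd m x) (Fin.natAdd n y) := by
    intro x
    rw [Fin.sum_univ_add]
    congr 1
    · rw [Finset.sum_eq_single x]
      · rw [hXd]; ring
      · intro x' _ hx'
        rw [hblock (Fin.castAdd m x') (Fin.castAdd m x)
          (by simpa [Fin.ext_iff] using fun h => hx' (Fin.ext h))
          (Or.inl ⟨x'.isLt, x.isLt⟩)]
        ring
      · simp
    · exact Finset.sum_congr rfl fun y _ => by rw [hZs]; ring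
  have h2 : ∀ y : Fin m, (∑ j, X (Fin.natAdd n y) j * Z j (Fin.natAdd n y)) =
      Z (Fin.natAdd n y) (Fin.natAdd n y) +
      ∑ x : Fin n, Z (Fin.castAdd m x) (Fin.natAdd n y) * X (Fin.castAdd m x) (Fin.natAdd n y) := by
    intro y
    rw [Fin.sum_univ_add]
    rw [add_comm]
    congr 1
    · rw [Finset.sum_eq_single y]
      · rw [hXd]; ring
      · intro y' _ hy'
        rw [hblock (Fin.natAdd n y') (Fin.natAdd n y)
          (by simpa [Fin.ext_iff] using fun h => hy' (Fin.ext h))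
          (Or.inr ⟨Nat.le_add_right n y'.val, Nat.le_add_right n y.val⟩)]
        ring
      · simp
    · exact Finset.sum_congr rfl fun x _ => by rw [hXs]; ring
  rw [Finset.sum_congr rfl fun x _ => h1 x, Finset.sum_congr rfl fun y _ => h2 y,
    Fin.sum_univ_add (f := fun i => Z i i)]
  have hcomm : (∑ y : Fin m, ∑ x : Fin n,
      Z (Fin.castAdd m x) (Fin.natAdd n y) * X (Fin.castAdd m x) (Fin.natAdd n y)) =
      ∑ x : Fin n, ∑ y : Fin m,
      Z (Fin.castAdd m x) (Fin.natAdd n y) * X (Fin.castAdd m x) (Fin.natAdd n y) :=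
    Finset.sum_comm
  rw [Finset.sum_add_distrib, Finset.sum_add_distrib, hcomm]
  ring

lemma gram_completion (n m : ℕ) (C : Matrix (Fin n) (Fin m) ℝ) (hC : C ∈ Cor n m) :
    ∃ X : Matrix (Fin (n + m)) (Fin (n + m)) ℝ,
      X.PosSemidef ∧ (∀ i, X i i = 1) ∧ (∀ i j, X i j = X j i) ∧
      ∀ x y, X (Fin.castAdd m x) (Fin.natAdd n y) = C x y := by
  obtain ⟨u, v, hu, hv, huv⟩ := hC
  set w : Fin (n + m) → EuclideanSpace ℝ (Fin (n + m)) := Fin.addCases u v with hw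
  refine ⟨Matrix.of fun i j => ⟪w i, w j⟫, ?_, ?_, ?_, ?_⟩
  · have : (Matrix.of fun i j => ⟪w i, w j⟫ :
        Matrix (Fin (n + m)) (Fin (n + m)) ℝ) =
        (Matrix.of fun k i => w i k)ᴴ * (Matrix.of fun k i => w i k) := by
      ext i j
      simp [Matrix.mul_apply, Matrix.conjTranspose_apply, PiLp.inner_apply,
        RCLike.inner_apply, starRingEnd_apply]
      exact Finset.sum_congr rfl fun _ _ => mul_comm _ _
    rw [this]
    exact Matrix.posSemidef_conjTranspose_mul_self _
  · intro i
    have hni : ‖w i‖ = 1 := by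
      induction i using Fin.addCases with
      | left x => simpa [hw] using hu x
      | right y => simpa [hw] using hv y
    show (inner ℝ (w i) (w i) : ℝ) = 1
    rw [real_inner_self_eq_norm_sq, hni]; norm_num
  · intro i j
    show (inner ℝ (w i) (w j) : ℝ) = inner ℝ (w j) (w i)
    exact real_inner_comm _ _
  · intro x y; simp [hw, huv]

theorem stmt6 (n m : ℕ) (Cstar : Matrix (Fin n) (Fin m) ℝ) (hCs : Cstar ∈ Cor n m)
    (Chat : Matrix (Fin (n + m)) (Fin (n + m)) ℝ)
    (hChat : IsPSDCompletion n m Chat Cstar)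
    (Z : Matrix (Fin (n + m)) (Fin (n + m)) ℝ) (hZ : Z.PosSemidef)
    (hblock : ∀ i j : Fin (n + m), i ≠ j →
      ((i.val < n ∧ j.val < n) ∨ (n ≤ i.val ∧ n ≤ j.val)) → Z i j = 0)
    (htrace : (Chat * Z).trace = 0) :
    (∀ C ∈ Cor n m,
      -2 * ∑ x : Fin n, ∑ y : Fin m,
          Z (Fin.castAdd m x) (Fin.natAdd n y) * C x y ≤ ∑ i, Z i i) ∧
    -2 * ∑ x : Fin n, ∑ y : Fin m,
        Z (Fin.castAdd m x) (Fin.natAdd n y) * Cstar x y = ∑ i, Z i i := by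
  have hZs : ∀ i j, Z i j = Z j i := fun i j => by
    have := congrFun (congrFun hZ.1 j) i
    simpa [Matrix.conjTranspose_apply] using this
  constructor
  · intro C hC
    obtain ⟨X, hXpsd, hXd, hXs, hXcross⟩ := gram_completion n m C hC
    have hexp := trace_expand n m Z hZs hblock X hXs hXd
    have hnn := trace_mul_psd_nonneg hXpsd hZ
    rw [hexp] at hnn
    have : (∑ x : Fin n, ∑ y : Fin m,
        Z (Fin.castAdd m x) (Fin.natAdd n y) * X (Fin.castAdd m x) (Fin.natAdd n y)) =
        ∑ x : Fin n, ∑ y : Fin m, Z (Fin.castAdd m x) (Fin.natAdd n y) * C x y :=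
      Finset.sum_congr rfl fun x _ => Finset.sum_congr rfl fun y _ => by rw [hXcross]
    rw [this] at hnn
    linarith
  · obtain ⟨⟨hCpsd, hCd⟩, hCcross⟩ := hChat
    have hCsym : ∀ i j, Chat i j = Chat j i := fun i j => by
      have := congrFun (congrFun hCpsd.1 j) i
      simpa [Matrix.conjTranspose_apply] using this
    have hexp := trace_expand n m Z hZs hblock Chat hCsym hCd
    rw [htrace] at hexp
    have : (∑ x : Fin n, ∑ y : Fin m,
        Z (Fin.castAdd m x) (Fin.natAdd n y) * Chat (Fin.castAdd m x) (Fin.natAdd n y)) =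
        ∑ x : Fin n, ∑ y : Fin m, Z (Fin.castAdd m x) (Fin.natAdd n y) * Cstar x y :=
      Finset.sum_congr rfl fun x _ => Finset.sum_congr rfl fun y _ => by rw [hCcross]
    rw [this] at hexp
    linarith
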